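/- Let H : [0,T] × ℝ^k × ℝ^k × ℝ → ℝ be C², fix s, and for q ∈ ℝ^k × ℝ^k × ℝ let τ ↦ φ^{s,τ}(q) = (x(τ,q), y(τ,q), z(τ,q)) solve the characteristic equations with φ^{s,s}(q) = q. Suppose (t', x', Y', z') ↦ Φ^{s,t'}(x', Y', z') is C¹ and for each t' in an interval around t the function Φ^{s,t'} is a generating function for φ^{s,t'}. Then for q = (x,y,z), the partial derivative of t' ↦ Φ^{s,t'}(x, y(t,q), z) at t' = t (with the arguments x, y(t,q), z held fixed) equals H(t, φ^{s,t}(q)). -/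

import Mathlib

open RealInnerProductSpace Filter Topology

/-- The partial gradient of the Hamiltonian `H(t,x,y,z)` in the `x` variable. -/
noncomputable def pdx {k : ℕ}
    (H : ℝ → EuclideanSpace ℝ (Fin k) → EuclideanSpace ℝ (Fin k) → ℝ → ℝ)
    (t : ℝ) (x y : EuclideanSpace ℝ (Fin k)) (z : ℝ) : EuclideanSpace ℝ (Fin k) :=
  gradient (fun x' => H t x' y z) x

/-- The partial gradient of the Hamiltonian `H(t,x,y,z)` in the `y` variable. -/
noncomputable def pdy {k : ℕ}
    (H : ℝ → EuclideanSpace ℝ (Fin k) → EuclideanSpace ℝ (Fin k) → ℝ → ℝ)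
    (t : ℝ) (x y : EuclideanSpace ℝ (Fin k)) (z : ℝ) : EuclideanSpace ℝ (Fin k) :=
  gradient (fun y' => H t x y' z) y

/-- The partial derivative of the Hamiltonian `H(t,x,y,z)` in the `z` variable. -/
noncomputable def pdz {k : ℕ}
    (H : ℝ → EuclideanSpace ℝ (Fin k) → EuclideanSpace ℝ (Fin k) → ℝ → ℝ)
    (t : ℝ) (x y : EuclideanSpace ℝ (Fin k)) (z : ℝ) : ℝ :=
  deriv (fun z' => H t x y z') z

/-- The curve `τ ↦ (x τ, y τ, z τ)` solves the characteristic equations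
`ẋ = ∂_yH`, `ẏ = −∂_xH − (∂_zH) y`, `ż = ⟨y, ∂_yH⟩ − H` on the set `I`. -/
def IsCharSol {k : ℕ}
    (H : ℝ → EuclideanSpace ℝ (Fin k) → EuclideanSpace ℝ (Fin k) → ℝ → ℝ)
    (I : Set ℝ) (x y : ℝ → EuclideanSpace ℝ (Fin k)) (z : ℝ → ℝ) : Prop :=
  ∀ τ ∈ I,
    HasDerivAt x (pdy H τ (x τ) (y τ) (z τ)) τ ∧
    HasDerivAt y (-pdx H τ (x τ) (y τ) (z τ) - pdz H τ (x τ) (y τ) (z τ) • y τ) τ ∧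
    HasDerivAt z (⟪y τ, pdy H τ (x τ) (y τ) (z τ)⟫ - H τ (x τ) (y τ) (z τ)) τ

/-- `Φ(x,Y,z)` is a generating function for the contactomorphism `φ`. -/
def IsGenFun {k : ℕ}
    (Φ : EuclideanSpace ℝ (Fin k) → EuclideanSpace ℝ (Fin k) → ℝ → ℝ)
    (φ : EuclideanSpace ℝ (Fin k) × EuclideanSpace ℝ (Fin k) × ℝ →
      EuclideanSpace ℝ (Fin k) × EuclideanSpace ℝ (Fin k) × ℝ) : Prop :=
  (∀ x Y z, 1 - deriv (fun z' => Φ x Y z') z ≠ 0) ∧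
  ∀ x y z X Y Z,
    (X - x = gradient (fun Y' => Φ x Y' z) Y ∧
      Y - y = -gradient (fun x' => Φ x' Y z) x - deriv (fun z' => Φ x Y z') z • y ∧
      Z - z = ⟪Y, X - x⟫ - Φ x Y z)
    ↔ φ (x, y, z) = (X, Y, Z)

/-- If `Φ^{s,t'}` is a `C¹` family of generating functions for the
characteristic flow maps `φ^{s,t'}` for `t'` in an interval around `t`, then
`∂_{t'} Φ^{s,t'}(x, y(t,q), z) |_{t'=t} = H(t, φ^{s,t}(q))`. -/
theorem generating_function_time_derivative {k : ℕ} (s t α β : ℝ)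
    (hsα : s ≤ α) (hαt : α < t) (htβ : t < β)
    (H : ℝ → EuclideanSpace ℝ (Fin k) → EuclideanSpace ℝ (Fin k) → ℝ → ℝ)
    (hH : ContDiff ℝ 2 fun p : ℝ × EuclideanSpace ℝ (Fin k) × EuclideanSpace ℝ (Fin k) × ℝ =>
      H p.1 p.2.1 p.2.2.1 p.2.2.2)
    (X Y : EuclideanSpace ℝ (Fin k) × EuclideanSpace ℝ (Fin k) × ℝ → ℝ →
      EuclideanSpace ℝ (Fin k))
    (Z : EuclideanSpace ℝ (Fin k) × EuclideanSpace ℝ (Fin k) × ℝ → ℝ → ℝ)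
    (hinit : ∀ q, X q s = q.1 ∧ Y q s = q.2.1 ∧ Z q s = q.2.2)
    (hflow : ∀ q, IsCharSol H (Set.Icc s β) (X q) (Y q) (Z q))
    (Φ : ℝ → EuclideanSpace ℝ (Fin k) → EuclideanSpace ℝ (Fin k) → ℝ → ℝ)
    (hΦC1 : ContDiff ℝ 1
      fun p : ℝ × EuclideanSpace ℝ (Fin k) × EuclideanSpace ℝ (Fin k) × ℝ =>
        Φ p.1 p.2.1 p.2.2.1 p.2.2.2)
    (hΦgen : ∀ t' ∈ Set.Ioo α β, IsGenFun (Φ t') fun q => (X q t', Y q t', Z q t')) :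
    ∀ q : EuclideanSpace ℝ (Fin k) × EuclideanSpace ℝ (Fin k) × ℝ,
      deriv (fun t' => Φ t' q.1 (Y q t) q.2.2) t = H t (X q t) (Y q t) (Z q t) := by
  intro q
  have htmem : t ∈ Set.Icc s β := ⟨(hsα.trans hαt.le), htβ.le⟩
  obtain ⟨hX', hY', hZ'⟩ := hflow q t htmem
  set Xd := pdy H t (X q t) (Y q t) (Z q t) with hXd
  set Yd := -pdx H t (X q t) (Y q t) (Z q t) - pdz H t (X q t) (Y q t) (Z q t) • Y q t with hYd
  set Zd := ⟪Y q t, Xd⟫ - H t (X q t) (Y q t) (Z q t) with hZd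
  -- generating function equations for t' ∈ Ioo α β
  have hgen : ∀ t' ∈ Set.Ioo α β,
      X q t' - q.1 = gradient (fun Y' => Φ t' q.1 Y' q.2.2) (Y q t') ∧
      Z q t' - q.2.2 = ⟪Y q t', X q t' - q.1⟫ - Φ t' q.1 (Y q t') q.2.2 := by
    intro t' ht'
    have h := ((hΦgen t' ht').2 q.1 q.2.1 q.2.2 (X q t') (Y q t') (Z q t')).mpr (by simp)
    exact ⟨h.1, h.2.2⟩
  -- differentiability setup
  have hFd : DifferentiableAt ℝ
      (fun p : ℝ × EuclideanSpace ℝ (Fin k) × EuclideanSpace ℝ (Fin k) × ℝ =>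
        Φ p.1 p.2.1 p.2.2.1 p.2.2.2) (t, q.1, Y q t, q.2.2) :=
    (hΦC1.differentiable one_ne_zero).differentiableAt
  set L := fderiv ℝ (fun p : ℝ × EuclideanSpace ℝ (Fin k) × EuclideanSpace ℝ (Fin k) × ℝ =>
        Φ p.1 p.2.1 p.2.2.1 p.2.2.2) (t, q.1, Y q t, q.2.2) with hLdef
  have hL := hFd.hasFDerivAt
  -- partial derivative in t
  have h1 : HasDerivAt (fun t' => Φ t' q.1 (Y q t) q.2.2) (L (1, 0)) t :=
    by have := hL.comp_hasDerivAt t ((hasDerivAt_id' t).prodMk (hasDerivAt_const t (q.1, Y q t, q.2.2))); exact this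
  -- full derivative along the curve
  have h2 : HasDerivAt (fun t' => Φ t' q.1 (Y q t') q.2.2)
      (L (1, (0:EuclideanSpace ℝ (Fin k)), Yd, (0:ℝ))) t :=
    by have := hL.comp_hasDerivAt t ((hasDerivAt_id' t).prodMk ((hasDerivAt_const t q.1).prodMk
      (hY'.prodMk (hasDerivAt_const t q.2.2)))); exact this
  -- the partial Y fderiv and gradient
  have hj : HasFDerivAt (fun Y' : EuclideanSpace ℝ (Fin k) =>
      ((t, q.1, Y', q.2.2) : ℝ × EuclideanSpace ℝ (Fin k) × EuclideanSpace ℝ (Fin k) × ℝ))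
      ((0 : EuclideanSpace ℝ (Fin k) →L[ℝ] ℝ).prod
        ((0 : EuclideanSpace ℝ (Fin k) →L[ℝ] EuclideanSpace ℝ (Fin k)).prod
          ((ContinuousLinearMap.id ℝ (EuclideanSpace ℝ (Fin k))).prod
            (0 : EuclideanSpace ℝ (Fin k) →L[ℝ] ℝ)))) (Y q t) :=
    (hasFDerivAt_const t _).prodMk ((hasFDerivAt_const q.1 _).prodMk
      ((hasFDerivAt_id _).prodMk (hasFDerivAt_const q.2.2 _)))
  have hgY : HasGradientAt (fun Y' => Φ t q.1 Y' q.2.2)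
      ((InnerProductSpace.toDual ℝ _).symm (L.comp ((0 : EuclideanSpace ℝ (Fin k) →L[ℝ] ℝ).prod
        ((0 : EuclideanSpace ℝ (Fin k) →L[ℝ] EuclideanSpace ℝ (Fin k)).prod
          ((ContinuousLinearMap.id ℝ (EuclideanSpace ℝ (Fin k))).prod
            (0 : EuclideanSpace ℝ (Fin k) →L[ℝ] ℝ)))))) (Y q t) :=
    by have := (hL.comp (Y q t) hj).hasGradientAt; exact this
  have hgrad : ∀ v : EuclideanSpace ℝ (Fin k),
      ⟪X q t - q.1, v⟫ = L ((0:ℝ), (0:EuclideanSpace ℝ (Fin k)), v, (0:ℝ)) := by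
    intro v
    have e1 := (hgen t ⟨hαt, htβ⟩).1
    rw [e1, hgY.gradient, InnerProductSpace.toDual_symm_apply]
    rfl
  -- identify g with the explicit formula near t
  have heq : (fun t' => Φ t' q.1 (Y q t') q.2.2)
      =ᶠ[𝓝 t] fun t' => ⟪Y q t', X q t' - q.1⟫ - (Z q t' - q.2.2) := by
    filter_upwards [Ioo_mem_nhds hαt htβ] with t' ht'
    have := (hgen t' ht').2
    linarith
  have hR : HasDerivAt (fun t' => ⟪Y q t', X q t' - q.1⟫ - (Z q t' - q.2.2))
      (⟪Y q t, Xd⟫ + ⟪Yd, X q t - q.1⟫ - Zd) t := by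
    have hXsub : HasDerivAt (fun t' => X q t' - q.1) Xd t := by
      simpa using hX'.sub_const q.1
    exact (HasDerivAt.inner ℝ hY' hXsub).sub (hZ'.sub_const q.2.2)
  have h2' : HasDerivAt (fun t' => Φ t' q.1 (Y q t') q.2.2)
      (⟪Y q t, Xd⟫ + ⟪Yd, X q t - q.1⟫ - Zd) t := hR.congr_of_eventuallyEq heq
  have huniq : L (1, (0:EuclideanSpace ℝ (Fin k)), Yd, (0:ℝ))
      = ⟪Y q t, Xd⟫ + ⟪Yd, X q t - q.1⟫ - Zd := h2.unique h2'
  have hsplit : L (1, (0:EuclideanSpace ℝ (Fin k)), Yd, (0:ℝ))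
      = L (1, 0) + L ((0:ℝ), (0:EuclideanSpace ℝ (Fin k)), Yd, (0:ℝ)) := by
    rw [← map_add]
    norm_num [Prod.ext_iff]
  have hcomm : ⟪Yd, X q t - q.1⟫ = ⟪X q t - q.1, Yd⟫ := real_inner_comm _ _
  have : L (1, 0) = H t (X q t) (Y q t) (Z q t) := by
    have hg := hgrad Yd
    rw [hsplit] at huniq
    rw [← hg] at huniq
    rw [hZd] at huniq
    linarith
  rw [h1.deriv, this]
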